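/- Let μ, ν be degree-one polynomials over F_q, and let G ∈ F_q[x] have degree larger than 1 with deg(G) coprime to q. If both G and μ∘G∘ν are odd polynomials, then ν(0) = 0. -/

import Mathlib

open Polynomial

lemma comp_C_mul_X_coeff {F : Type*} [CommRing F] (P : F[X]) (c : F) (k : ℕ) :
    (P.comp (C c * X)).coeff k = c ^ k * P.coeff k := by
  rw [comp_eq_sum_left, coeff_sum]
  simp only [mul_pow, ← C_pow, ← mul_assoc, ← C_mul, coeff_C_mul, coeff_X_pow, sum]
  rw [Finset.sum_eq_single k]
  · by_cases h : k ∈ P.support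
    · simp [mul_comm]
    · simp [Polynomial.notMem_support_iff.mp h]
  · intro b _ hb; simp [Ne.symm hb]
  · intro h; simp [Polynomial.notMem_support_iff.mp h]

/-- If `μ, ν` are degree-one polynomials over the finite field `F` with `q` elements,
`deg G > 1` is coprime to `q`, and both `G` and `μ ∘ G ∘ ν` are odd polynomials,
then `ν(0) = 0`. -/
theorem stmt_1 (q : ℕ) (F : Type*) [Field F] [Fintype F] (hq : Fintype.card F = q)
    (μ ν G : Polynomial F) (hμ : μ.degree = 1) (hν : ν.degree = 1)
    (hGdeg : 1 < G.natDegree) (hcop : Nat.Coprime G.natDegree q)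
    (hGodd : ∀ n : ℕ, Even n → G.coeff n = 0)
    (hcompodd : ∀ n : ℕ, Even n → ((μ.comp G).comp ν).coeff n = 0) :
    ν.eval 0 = 0 := by
  set n := G.natDegree with hn
  have hG0 : G ≠ 0 := fun h => by simp [h, hn] at hGdeg
  have hgn : G.coeff n ≠ 0 := by
    simpa [hn] using mt leadingCoeff_eq_zero.mp hG0
  -- n is odd
  have hodd : ¬ Even n := fun h => hgn (hGodd n h)
  -- (n : F) ≠ 0
  have hnF : (n : F) ≠ 0 := by
    intro h
    obtain ⟨p, hpI⟩ := CharP.exists F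
    haveI := hpI
    obtain ⟨m, hpprime, hcard⟩ := FiniteField.card F p
    have hpn : p ∣ n := (CharP.cast_eq_zero_iff F p n).mp h
    have hpq : p ∣ q := by
      rw [← hq, hcard]
      exact dvd_pow_self p m.ne_zero
    exact hpprime.one_lt.ne' (Nat.dvd_one.mp (hcop ▸ Nat.dvd_gcd hpn hpq))
  -- linear coefficients
  have hμeq := eq_X_add_C_of_degree_le_one hμ.le
  have hνeq := eq_X_add_C_of_degree_le_one hν.le
  set a := μ.coeff 1 with ha'
  set b := μ.coeff 0 with hb'
  set c := ν.coeff 1 with hc'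
  set d := ν.coeff 0 with hd'
  have ha : a ≠ 0 := coeff_ne_zero_of_eq_degree hμ
  have hc : c ≠ 0 := coeff_ne_zero_of_eq_degree hν
  have heval : ν.eval 0 = d := by rw [hνeq]; simp
  -- rewrite the composition
  have key : (μ.comp G).comp ν = C a * ((taylor d G).comp (C c * X)) + C b := by
    rw [hμeq, hνeq, taylor_apply]
    have h1 : (X + C d).comp (C c * X) = C c * X + C d := by simp
    rw [comp_assoc G (X + C d) (C c * X), h1]
    simp [add_comp, mul_comp]
  -- n - 1 is even
  have hm1 : Even (n - 1) := Nat.Odd.sub_odd (Nat.not_even_iff_odd.mp hodd) odd_one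
  have h0 := hcompodd (n - 1) hm1
  rw [key] at h0
  have hn1 : n - 1 ≠ 0 := by omega
  rw [coeff_add, coeff_C, if_neg hn1, coeff_C_mul, _root_.comp_C_mul_X_coeff, taylor_coeff] at h0
  -- compute the Hasse derivative
  have hdeg : (G.hasseDeriv (n - 1)).degree ≤ 1 := by
    have := G.natDegree_hasseDeriv_le (n - 1)
    have h2 : G.natDegree - (n - 1) = 1 := by omega
    rw [h2] at this
    exact_mod_cast Polynomial.natDegree_le_iff_degree_le.mp this
  have hHeq := eq_X_add_C_of_degree_le_one hdeg
  have hc0 : (G.hasseDeriv (n - 1)).coeff 0 = 0 := by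
    rw [hasseDeriv_coeff, zero_add, Nat.choose_self, Nat.cast_one, one_mul]
    exact hGodd (n - 1) hm1
  have hc1 : (G.hasseDeriv (n - 1)).coeff 1 = n * G.coeff n := by
    rw [hasseDeriv_coeff]
    have h3 : 1 + (n - 1) = n := by omega
    rw [h3, Nat.choose_symm (by omega : 1 ≤ n), Nat.choose_one_right]
  rw [hHeq, hc0, hc1] at h0
  simp only [eval_add, eval_mul, eval_C, eval_X, map_zero, add_zero] at h0
  -- conclude d = 0
  rw [heval]
  simpa [mul_eq_zero, ha, hc, hnF, hgn, pow_eq_zero_iff] using h0
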